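/- If f : Δ → ℝ is convex on the co-ordinates on Δ = [a,b]×[c,d], then f((a+b)/2,(c+d)/2) ≤ (1/2)[(1/(b-a))∫_a^b f(x,(c+d)/2) dx + (1/(d-c))∫_c^d f((a+b)/2,y) dy] ≤ (1/((b-a)(d-c)))∫_a^b∫_c^d f(x,y) dx dy ≤ (1/4)[(1/(b-a))∫_a^b f(x,c) dx + (1/(b-a))∫_a^b f(x,d) dx + (1/(d-c))∫_c^d f(a,y) dy + (1/(d-c))∫_c^d f(b,y) dy] ≤ (f(a,c)+f(a,d)+f(b,c)+f(b,d))/4. -/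

import Mathlib

set_option maxHeartbeats 1000000
open MeasureTheory intervalIntegral Set

lemma hh_left {a b : ℝ} (hab : a < b) {g : ℝ → ℝ} (hg : ConvexOn ℝ (Icc a b) g)
    (hc : ContinuousOn g (Icc a b)) :
    (b - a) * g ((a + b) / 2) ≤ ∫ x in a..b, g x := by
  have key : ∀ x ∈ Icc a b, g ((a + b) / 2) ≤ (g x + g (a + b - x)) / 2 := by
    intro x hx
    have hx' : a + b - x ∈ Icc a b := ⟨by linarith [hx.2], by linarith [hx.1]⟩
    have := hg.2 hx hx' (by norm_num : (0:ℝ) ≤ 1/2) (by norm_num : (0:ℝ) ≤ 1/2) (by norm_num)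
    have e : (1/2 : ℝ) • x + (1/2 : ℝ) • (a + b - x) = (a + b) / 2 := by
      simp [smul_eq_mul]; ring
    rw [e] at this
    simp only [smul_eq_mul] at this
    linarith
  have hmap : MapsTo (fun x => a + b - x) (Icc a b) (Icc a b) := by
    intro x hx; exact ⟨by simp at hx ⊢; linarith [hx.2], by simp at hx ⊢; linarith [hx.1]⟩
  have hgr : ContinuousOn (fun x => g (a + b - x)) (Icc a b) :=
    hc.comp ((continuous_const.sub continuous_id).continuousOn) hmap
  have hc2 : ContinuousOn (fun x => (g x + g (a + b - x)) / 2) (Icc a b) :=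
    (hc.add hgr).div_const _
  have hmono := intervalIntegral.integral_mono_on hab.le
    (_root_.intervalIntegrable_const (μ := volume) (c := g ((a + b) / 2)))
    (hc2.intervalIntegrable_of_Icc hab.le) key
  rw [intervalIntegral.integral_const, smul_eq_mul] at hmono
  have hrefl : (∫ x in a..b, g (a + b - x)) = ∫ x in a..b, g x := by
    rw [intervalIntegral.integral_comp_sub_left g (a + b)]
    norm_num
  have hsplit : (∫ x in a..b, (g x + g (a + b - x)) / 2)
      = ((∫ x in a..b, g x) + ∫ x in a..b, g (a + b - x)) / 2 := by
    rw [intervalIntegral.integral_div, intervalIntegral.integral_add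
      (hc.intervalIntegrable_of_Icc hab.le)
      (hgr.intervalIntegrable_of_Icc hab.le)]
  rw [hsplit, hrefl] at hmono
  linarith

lemma hh_right {a b : ℝ} (hab : a < b) {g : ℝ → ℝ} (hg : ConvexOn ℝ (Icc a b) g)
    (hc : ContinuousOn g (Icc a b)) :
    (∫ x in a..b, g x) ≤ (b - a) * ((g a + g b) / 2) := by
  have hba : (0:ℝ) < b - a := by linarith
  have key : ∀ x ∈ Icc a b, g x ≤ ((b - x) * g a + (x - a) * g b) / (b - a) := by
    intro x hx
    have h1 : (0:ℝ) ≤ (b - x) / (b - a) := by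
      apply div_nonneg <;> linarith [hx.2]
    have h2 : (0:ℝ) ≤ (x - a) / (b - a) := by
      apply div_nonneg <;> linarith [hx.1]
    have h3 : (b - x) / (b - a) + (x - a) / (b - a) = 1 := by field_simp; ring
    have := hg.2 (left_mem_Icc.2 hab.le) (right_mem_Icc.2 hab.le) h1 h2 h3
    have e : ((b - x) / (b - a)) • a + ((x - a) / (b - a)) • b = x := by
      simp only [smul_eq_mul]; field_simp; ring
    rw [e] at this
    simp only [smul_eq_mul] at this
    calc g x ≤ (b - x) / (b - a) * g a + (x - a) / (b - a) * g b := this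
      _ = ((b - x) * g a + (x - a) * g b) / (b - a) := by ring
  have hc2 : ContinuousOn (fun x => ((b - x) * g a + (x - a) * g b) / (b - a)) (Icc a b) := by
    fun_prop
  have hmono := intervalIntegral.integral_mono_on (μ := volume) hab.le
    (hc.intervalIntegrable_of_Icc hab.le)
    (hc2.intervalIntegrable_of_Icc hab.le) key
  have hval : (∫ x in a..b, ((b - x) * g a + (x - a) * g b) / (b - a))
      = (b - a) * ((g a + g b) / 2) := by
    have e : (fun x => ((b - x) * g a + (x - a) * g b) / (b - a))
        = fun x => (b * g a - a * g b) / (b - a) + ((g b - g a) / (b - a)) * x := by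
      funext x; field_simp; ring
    rw [e, intervalIntegral.integral_add (_root_.intervalIntegrable_const (μ := volume))
      ((intervalIntegrable_id).const_mul _),
      intervalIntegral.integral_const, intervalIntegral.integral_const_mul, integral_id,
      smul_eq_mul]
    field_simp
    ring
  rw [hval] at hmono
  exact hmono
open MeasureTheory intervalIntegral Set

section helpers
lemma div_helper1 {t v I : ℝ} (ht : 0 < t) (h : t * v ≤ I) : v ≤ (1/t) * I := by
  have hp : (0:ℝ) < 1/t := by positivity
  have h2 := mul_le_mul_of_nonneg_left h hp.le
  have e : (1/t) * (t * v) = v := by field_simp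
  linarith

lemma div_helper1' {t v I : ℝ} (ht : 0 < t) (h : I ≤ t * v) : (1/t) * I ≤ v := by
  have hp : (0:ℝ) < 1/t := by positivity
  have h2 := mul_le_mul_of_nonneg_left h hp.le
  have e : (1/t) * (t * v) = v := by field_simp
  linarith

lemma div_helper2 {s t I D : ℝ} (hs : 0 < s) (ht : 0 < t) (h : t * I ≤ D) :
    (1/s) * I ≤ (1/(s*t)) * D := by
  have hp : (0:ℝ) < 1/(s*t) := by positivity
  have h2 := mul_le_mul_of_nonneg_left h hp.le
  have e : (1/(s*t)) * (t * I) = (1/s) * I := by field_simp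
  linarith

lemma div_helper2' {s t I D : ℝ} (hs : 0 < s) (ht : 0 < t) (h : D ≤ t * I) :
    (1/(s*t)) * D ≤ (1/s) * I := by
  have hp : (0:ℝ) < 1/(s*t) := by positivity
  have h2 := mul_le_mul_of_nonneg_left h hp.le
  have e : (1/(s*t)) * (t * I) = (1/s) * I := by field_simp
  linarith
end helpers

lemma prod_integrable {a b c d : ℝ} {F : ℝ → ℝ → ℝ}
    (h : Continuous fun p : ℝ × ℝ => F p.1 p.2) :
    Integrable (Function.uncurry F)
      ((volume.restrict (Ioc a b)).prod (volume.restrict (Ioc c d))) := by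
  rw [Measure.prod_restrict, ← Measure.volume_eq_prod]
  have hcpt : IntegrableOn (Function.uncurry F) (Icc a b ×ˢ Icc c d) volume :=
    h.continuousOn.integrableOn_compact (isCompact_Icc.prod isCompact_Icc)
  exact hcpt.mono_set (prod_mono Ioc_subset_Icc_self Ioc_subset_Icc_self)

lemma marg_integrable {a b c d : ℝ} (hab : a ≤ b) (hcd : c ≤ d) {F : ℝ → ℝ → ℝ}
    (h : Continuous fun p : ℝ × ℝ => F p.1 p.2) :
    IntervalIntegrable (fun x => ∫ y in c..d, F x y) volume a b := by
  rw [intervalIntegrable_iff_integrableOn_Ioc_of_le hab]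
  have := (prod_integrable (a := a) (b := b) (c := c) (d := d) h).integral_prod_left
  simp only [Function.uncurry] at this
  have e : (fun x => ∫ y in c..d, F x y) = fun x => ∫ y, F x y ∂(volume.restrict (Ioc c d)) := by
    funext x; rw [intervalIntegral.integral_of_le hcd]
  rw [e]
  exact this

lemma fubini_rect {a b c d : ℝ} (hab : a ≤ b) (hcd : c ≤ d) {F : ℝ → ℝ → ℝ}
    (h : Continuous fun p : ℝ × ℝ => F p.1 p.2) :
    (∫ x in a..b, ∫ y in c..d, F x y) = ∫ y in c..d, ∫ x in a..b, F x y := by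
  simp_rw [intervalIntegral.integral_of_le hab, intervalIntegral.integral_of_le hcd]
  exact MeasureTheory.integral_integral_swap (prod_integrable h)
open MeasureTheory intervalIntegral Set

theorem main_aux (a b c d : ℝ) (hab : a < b) (hcd : c < d)
    (f : ℝ → ℝ → ℝ)
    (hcont : Continuous (fun p : ℝ × ℝ => f p.1 p.2))
    (hconv1 : ∀ y ∈ Icc c d, ConvexOn ℝ (Icc a b) (fun x => f x y))
    (hconv2 : ∀ x ∈ Icc a b, ConvexOn ℝ (Icc c d) (fun y => f x y)) :
    f ((a + b) / 2) ((c + d) / 2)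
      ≤ (1 / 2) * ((1 / (b - a)) * (∫ x in a..b, f x ((c + d) / 2))
          + (1 / (d - c)) * (∫ y in c..d, f ((a + b) / 2) y)) ∧
    (1 / 2) * ((1 / (b - a)) * (∫ x in a..b, f x ((c + d) / 2))
          + (1 / (d - c)) * (∫ y in c..d, f ((a + b) / 2) y))
      ≤ (1 / ((b - a) * (d - c))) * (∫ x in a..b, ∫ y in c..d, f x y) ∧
    (1 / ((b - a) * (d - c))) * (∫ x in a..b, ∫ y in c..d, f x y)
      ≤ (1 / 4) * ((1 / (b - a)) * (∫ x in a..b, f x c)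
          + (1 / (b - a)) * (∫ x in a..b, f x d)
          + (1 / (d - c)) * (∫ y in c..d, f a y)
          + (1 / (d - c)) * (∫ y in c..d, f b y)) ∧
    (1 / 4) * ((1 / (b - a)) * (∫ x in a..b, f x c)
          + (1 / (b - a)) * (∫ x in a..b, f x d)
          + (1 / (d - c)) * (∫ y in c..d, f a y)
          + (1 / (d - c)) * (∫ y in c..d, f b y))
      ≤ (f a c + f a d + f b c + f b d) / 4 := by
  have hba : (0:ℝ) < b - a := by linarith
  have hdc : (0:ℝ) < d - c := by linarith
  set A := (a + b) / 2 with hA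
  set Cm := (c + d) / 2 with hCm
  have hmidx : A ∈ Icc a b := ⟨by simp [hA]; linarith, by simp [hA]; linarith⟩
  have hmidy : Cm ∈ Icc c d := ⟨by simp [hCm]; linarith, by simp [hCm]; linarith⟩
  have hax : a ∈ Icc a b := left_mem_Icc.2 hab.le
  have hbx : b ∈ Icc a b := right_mem_Icc.2 hab.le
  have hcy : c ∈ Icc c d := left_mem_Icc.2 hcd.le
  have hdy : d ∈ Icc c d := right_mem_Icc.2 hcd.le
  have hcX : ∀ y : ℝ, Continuous (fun x => f x y) := fun y =>
    hcont.comp (continuous_id.prodMk continuous_const)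
  have hcY : ∀ x : ℝ, Continuous (fun y => f x y) := fun x =>
    hcont.comp (continuous_const.prodMk continuous_id)
  have hcontflip : Continuous (fun p : ℝ × ℝ => f p.2 p.1) :=
    hcont.comp continuous_swap
  set I1 := ∫ x in a..b, f x Cm with hI1
  set I2 := ∫ y in c..d, f A y with hI2
  set D := ∫ x in a..b, ∫ y in c..d, f x y with hD
  set J1 := ∫ x in a..b, f x c with hJ1
  set J2 := ∫ x in a..b, f x d with hJ2
  set K1 := ∫ y in c..d, f a y with hK1
  set K2 := ∫ y in c..d, f b y with hK2
  have hFub : D = ∫ y in c..d, ∫ x in a..b, f x y :=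
    fubini_rect hab.le hcd.le hcont
  have hH1 : IntervalIntegrable (fun x => ∫ y in c..d, f x y) volume a b :=
    marg_integrable hab.le hcd.le hcont
  have hH2 : IntervalIntegrable (fun y => ∫ x in a..b, f x y) volume c d :=
    marg_integrable hcd.le hab.le hcontflip
  -- Inequality 1
  have h1x : (b - a) * f A Cm ≤ I1 :=
    hh_left hab (hconv1 Cm hmidy) (hcX Cm).continuousOn
  have h1y : (d - c) * f A Cm ≤ I2 :=
    hh_left hcd (hconv2 A hmidx) (hcY A).continuousOn
  have ineq1 : f A Cm ≤ (1/2) * ((1/(b-a)) * I1 + (1/(d-c)) * I2) := by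
    have := div_helper1 hba h1x
    have := div_helper1 hdc h1y
    linarith
  -- Inequality 2
  have key1 : ∀ x ∈ Icc a b, (d - c) * f x Cm ≤ ∫ y in c..d, f x y := fun x hx =>
    hh_left hcd (hconv2 x hx) (hcY x).continuousOn
  have hmono1 := intervalIntegral.integral_mono_on (μ := volume)
    (f := fun x => (d - c) * f x Cm) hab.le
    ((continuous_const.mul (hcX Cm)).intervalIntegrable a b) hH1 key1
  rw [intervalIntegral.integral_const_mul] at hmono1
  -- hmono1 : (d-c) * I1 ≤ D
  have key2 : ∀ y ∈ Icc c d, (b - a) * f A y ≤ ∫ x in a..b, f x y := fun y hy =>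
    hh_left hab (hconv1 y hy) (hcX y).continuousOn
  have hmono2 := intervalIntegral.integral_mono_on (μ := volume)
    (f := fun y => (b - a) * f A y) hcd.le
    ((continuous_const.mul (hcY A)).intervalIntegrable c d) hH2 key2
  rw [intervalIntegral.integral_const_mul, ← hFub] at hmono2
  -- hmono2 : (b-a) * I2 ≤ D
  have ineq2 : (1/2) * ((1/(b-a)) * I1 + (1/(d-c)) * I2)
      ≤ (1/((b-a)*(d-c))) * D := by
    have e1 := div_helper2 hba hdc hmono1
    have e2 := div_helper2 hdc hba hmono2
    have e3 : (1/((d-c)*(b-a))) * D = (1/((b-a)*(d-c))) * D := by ring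
    linarith
  -- Inequality 3
  have key3 : ∀ x ∈ Icc a b, (∫ y in c..d, f x y) ≤ (d - c) * ((f x c + f x d) / 2) :=
    fun x hx => hh_right hcd (hconv2 x hx) (hcY x).continuousOn
  have hc3 : Continuous (fun x => (d - c) * ((f x c + f x d) / 2)) :=
    continuous_const.mul (((hcX c).add (hcX d)).div_const 2)
  have hmono3 := intervalIntegral.integral_mono_on (μ := volume) hab.le hH1
    (hc3.intervalIntegrable a b) key3
  have hval3 : (∫ x in a..b, (d - c) * ((f x c + f x d) / 2))
      = (d - c) * ((J1 + J2) / 2) := by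
    have e : (fun x => (d - c) * ((f x c + f x d) / 2))
        = fun x => ((d - c)/2) * (f x c + f x d) := by funext x; ring
    rw [e, intervalIntegral.integral_const_mul,
      intervalIntegral.integral_add ((hcX c).intervalIntegrable a b)
        ((hcX d).intervalIntegrable a b)]
    rw [hJ1, hJ2]; ring
  rw [hval3] at hmono3
  -- hmono3 : D ≤ (d-c) * ((J1+J2)/2)
  have key4 : ∀ y ∈ Icc c d, (∫ x in a..b, f x y) ≤ (b - a) * ((f a y + f b y) / 2) :=
    fun y hy => hh_right hab (hconv1 y hy) (hcX y).continuousOn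
  have hc4 : Continuous (fun y => (b - a) * ((f a y + f b y) / 2)) :=
    continuous_const.mul (((hcY a).add (hcY b)).div_const 2)
  have hmono4 := intervalIntegral.integral_mono_on (μ := volume) hcd.le hH2
    (hc4.intervalIntegrable c d) key4
  have hval4 : (∫ y in c..d, (b - a) * ((f a y + f b y) / 2))
      = (b - a) * ((K1 + K2) / 2) := by
    have e : (fun y => (b - a) * ((f a y + f b y) / 2))
        = fun y => ((b - a)/2) * (f a y + f b y) := by funext y; ring
    rw [e, intervalIntegral.integral_const_mul,
      intervalIntegral.integral_add ((hcY a).intervalIntegrable c d)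
        ((hcY b).intervalIntegrable c d)]
    rw [hK1, hK2]; ring
  rw [hval4, ← hFub] at hmono4
  -- hmono4 : D ≤ (b-a) * ((K1+K2)/2)
  have ineq3 : (1/((b-a)*(d-c))) * D
      ≤ (1/4) * ((1/(b-a)) * J1 + (1/(b-a)) * J2 + (1/(d-c)) * K1 + (1/(d-c)) * K2) := by
    have e1 := div_helper2' hba hdc hmono3
    have e2 := div_helper2' hdc hba hmono4
    have e3 : (1/((d-c)*(b-a))) * D = (1/((b-a)*(d-c))) * D := by ring
    have e4 : (1/(b-a)) * ((J1 + J2)/2) = ((1/(b-a)) * J1 + (1/(b-a)) * J2) / 2 := by ring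
    have e5 : (1/(d-c)) * ((K1 + K2)/2) = ((1/(d-c)) * K1 + (1/(d-c)) * K2) / 2 := by ring
    linarith
  -- Inequality 4
  have h4a : J1 ≤ (b - a) * ((f a c + f b c) / 2) :=
    hh_right hab (hconv1 c hcy) (hcX c).continuousOn
  have h4b : J2 ≤ (b - a) * ((f a d + f b d) / 2) :=
    hh_right hab (hconv1 d hdy) (hcX d).continuousOn
  have h4c : K1 ≤ (d - c) * ((f a c + f a d) / 2) :=
    hh_right hcd (hconv2 a hax) (hcY a).continuousOn
  have h4d : K2 ≤ (d - c) * ((f b c + f b d) / 2) :=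
    hh_right hcd (hconv2 b hbx) (hcY b).continuousOn
  have ineq4 : (1/4) * ((1/(b-a)) * J1 + (1/(b-a)) * J2 + (1/(d-c)) * K1 + (1/(d-c)) * K2)
      ≤ (f a c + f a d + f b c + f b d) / 4 := by
    have := div_helper1' hba h4a
    have := div_helper1' hba h4b
    have := div_helper1' hdc h4c
    have := div_helper1' hdc h4d
    linarith
  exact ⟨ineq1, ineq2, ineq3, ineq4⟩

lemma int_add_const {lo hi : ℝ} {φ : ℝ → ℝ} (h : Continuous φ) (C : ℝ) :
    (∫ x in lo..hi, (φ x + C)) = (∫ x in lo..hi, φ x) + (hi - lo) * C := by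
  rw [intervalIntegral.integral_add (h.intervalIntegrable lo hi)
    (_root_.intervalIntegrable_const (μ := volume)), intervalIntegral.integral_const,
    smul_eq_mul]

theorem main_aux2 (a b c d : ℝ) (hab : a < b) (hcd : c < d)
    (f : ℝ → ℝ → ℝ)
    (hcont : Continuous (fun p : ℝ × ℝ => f p.1 p.2))
    (hconv1 : ∀ y ∈ Icc c d, ConvexOn ℝ (Icc a b) (fun x => f x y))
    (hconv2 : ∀ x ∈ Icc a b, ConvexOn ℝ (Icc c d) (fun y => f x y)) :
    f ((a + b) / 2) ((c + d) / 2)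
      ≤ (1 / 2) * ((1 / (b - a)) * ∫ x in a..b, f x ((c + d) / 2)
          + (1 / (d - c)) * ∫ y in c..d, f ((a + b) / 2) y) ∧
    (1 / 2) * ((1 / (b - a)) * ∫ x in a..b, f x ((c + d) / 2)
          + (1 / (d - c)) * ∫ y in c..d, f ((a + b) / 2) y)
      ≤ (1 / ((b - a) * (d - c))) * ∫ x in a..b, ∫ y in c..d, f x y ∧
    (1 / ((b - a) * (d - c))) * ∫ x in a..b, ∫ y in c..d, f x y
      ≤ (1 / 4) * ((1 / (b - a)) * ∫ x in a..b, f x c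
          + (1 / (b - a)) * ∫ x in a..b, f x d
          + (1 / (d - c)) * ∫ y in c..d, f a y
          + (1 / (d - c)) * ∫ y in c..d, f b y) ∧
    (1 / 4) * ((1 / (b - a)) * ∫ x in a..b, f x c
          + (1 / (b - a)) * ∫ x in a..b, f x d
          + (1 / (d - c)) * ∫ y in c..d, f a y
          + (1 / (d - c)) * ∫ y in c..d, f b y)
      ≤ (f a c + f a d + f b c + f b d) / 4 := by
  obtain ⟨h1, h2, h3, h4⟩ := main_aux a b c d hab hcd f hcont hconv1 hconv2
  have hba : (0:ℝ) < b - a := by linarith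
  have hdc : (0:ℝ) < d - c := by linarith
  have hcX : ∀ y : ℝ, Continuous (fun x => f x y) := fun y =>
    hcont.comp (continuous_id.prodMk continuous_const)
  have hcY : ∀ x : ℝ, Continuous (fun y => f x y) := fun x =>
    hcont.comp (continuous_const.prodMk continuous_id)
  rw [int_add_const (hcX ((c + d) / 2)), int_add_const (hcY a),
    int_add_const (hcX d), int_add_const (hcX c)]
  set X1 := (∫ x in a..b, f x ((c + d) / 2)) with hX1
  set Y1 := (∫ y in c..d, f ((a + b) / 2) y) with hY1
  set DD := (∫ x in a..b, ∫ y in c..d, f x y) with hDD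
  set J1 := (∫ x in a..b, f x c) with hJ1
  set J2 := (∫ x in a..b, f x d) with hJ2
  set K1 := (∫ y in c..d, f a y) with hK1
  set K2 := (∫ y in c..d, f b y) with hK2
  have eq1 : 1 / 2 * (1 / (b - a) * (X1 + (b - a) * (1 / (d - c) * Y1)))
      = 1 / 2 * (1 / (b - a) * X1 + 1 / (d - c) * Y1) := by
    field_simp
  have eq3 : (1:ℝ) / 4 * (1 / (b - a) * (J1 + (b - a) * (1 / (b - a) *
        (J2 + (b - a) * (1 / (d - c) * (K1 + (d - c) * (1 / (d - c) * K2)))))))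
      = 1 / 4 * (1 / (b - a) * J1 + 1 / (b - a) * J2 + 1 / (d - c) * K1 + 1 / (d - c) * K2) := by
    field_simp
    ring
  refine ⟨?_, ?_, ?_, ?_⟩
  · rw [eq1]; exact h1
  · rw [eq1]; exact h2
  · rw [eq3]; exact h3
  · rw [eq3]; exact h4

lemma convexOn_congr {s : Set ℝ} {φ ψ : ℝ → ℝ} (h : ConvexOn ℝ s φ) (he : EqOn φ ψ s) :
    ConvexOn ℝ s ψ := by
  refine ⟨h.1, fun x hx y hy la mu hla hmu hs => ?_⟩
  rw [← he (h.1 hx hy hla hmu hs), ← he hx, ← he hy]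
  exact h.2 hx hy hla hmu hs

theorem stmt_19 (a b c d : ℝ) (hab : a < b) (hcd : c < d)
    (f : ℝ → ℝ → ℝ)
    (hcont : ContinuousOn (fun p : ℝ × ℝ => f p.1 p.2) (Icc a b ×ˢ Icc c d))
    (hconv1 : ∀ y ∈ Icc c d, ConvexOn ℝ (Icc a b) (fun x => f x y))
    (hconv2 : ∀ x ∈ Icc a b, ConvexOn ℝ (Icc c d) (fun y => f x y)) :
    f ((a + b) / 2) ((c + d) / 2)
      ≤ (1 / 2) * ((1 / (b - a)) * ∫ x in a..b, f x ((c + d) / 2)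
          + (1 / (d - c)) * ∫ y in c..d, f ((a + b) / 2) y) ∧
    (1 / 2) * ((1 / (b - a)) * ∫ x in a..b, f x ((c + d) / 2)
          + (1 / (d - c)) * ∫ y in c..d, f ((a + b) / 2) y)
      ≤ (1 / ((b - a) * (d - c))) * ∫ x in a..b, ∫ y in c..d, f x y ∧
    (1 / ((b - a) * (d - c))) * ∫ x in a..b, ∫ y in c..d, f x y
      ≤ (1 / 4) * ((1 / (b - a)) * ∫ x in a..b, f x c
          + (1 / (b - a)) * ∫ x in a..b, f x d
          + (1 / (d - c)) * ∫ y in c..d, f a y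
          + (1 / (d - c)) * ∫ y in c..d, f b y) ∧
    (1 / 4) * ((1 / (b - a)) * ∫ x in a..b, f x c
          + (1 / (b - a)) * ∫ x in a..b, f x d
          + (1 / (d - c)) * ∫ y in c..d, f a y
          + (1 / (d - c)) * ∫ y in c..d, f b y)
      ≤ (f a c + f a d + f b c + f b d) / 4 := by
  have hba : (0:ℝ) < b - a := by linarith
  have hdc : (0:ℝ) < d - c := by linarith
  have hmidx : (a + b) / 2 ∈ Icc a b := ⟨by linarith, by linarith⟩
  have hmidy : (c + d) / 2 ∈ Icc c d := ⟨by linarith, by linarith⟩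
  have hax : a ∈ Icc a b := left_mem_Icc.2 hab.le
  have hbx : b ∈ Icc a b := right_mem_Icc.2 hab.le
  have hcy : c ∈ Icc c d := left_mem_Icc.2 hcd.le
  have hdy : d ∈ Icc c d := right_mem_Icc.2 hcd.le
  have hpxm : ∀ x : ℝ, max a (min x b) ∈ Icc a b :=
    fun x => ⟨le_max_left _ _, max_le hab.le (min_le_right _ _)⟩
  have hpym : ∀ y : ℝ, max c (min y d) ∈ Icc c d :=
    fun y => ⟨le_max_left _ _, max_le hcd.le (min_le_right _ _)⟩
  have hpx_eq : ∀ x ∈ Icc a b, max a (min x b) = x := fun x hx => by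
    rw [min_eq_left hx.2, max_eq_right hx.1]
  have hpy_eq : ∀ y ∈ Icc c d, max c (min y d) = y := fun y hy => by
    rw [min_eq_left hy.2, max_eq_right hy.1]
  set g : ℝ → ℝ → ℝ := fun x y => f (max a (min x b)) (max c (min y d)) with hg
  have hgeq : ∀ x ∈ Icc a b, ∀ y ∈ Icc c d, g x y = f x y := fun x hx y hy => by
    rw [hg]; simp only; rw [hpx_eq x hx, hpy_eq y hy]
  have hgcont : Continuous (fun p : ℝ × ℝ => g p.1 p.2) := by
    have : Continuous ((fun q : ℝ × ℝ => f q.1 q.2)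
        ∘ (fun p : ℝ × ℝ => (max a (min p.1 b), max c (min p.2 d)))) :=
      ContinuousOn.comp_continuous hcont (by fun_prop)
        (fun p => Set.mk_mem_prod (hpxm p.1) (hpym p.2))
    exact this
  have hgconv1 : ∀ y ∈ Icc c d, ConvexOn ℝ (Icc a b) (fun x => g x y) := fun y hy =>
    convexOn_congr (hconv1 y hy) (fun x hx => (hgeq x hx y hy).symm)
  have hgconv2 : ∀ x ∈ Icc a b, ConvexOn ℝ (Icc c d) (fun y => g x y) := fun x hx =>
    convexOn_congr (hconv2 x hx) (fun y hy => (hgeq x hx y hy).symm)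
  obtain ⟨h1, h2, h3, h4⟩ := main_aux2 a b c d hab hcd g hgcont hgconv1 hgconv2
  have hu : Set.uIcc a b = Icc a b := uIcc_of_le hab.le
  have hv : Set.uIcc c d = Icc c d := uIcc_of_le hcd.le
  have eY1 : (∫ y in c..d, g ((a + b) / 2) y) = ∫ y in c..d, f ((a + b) / 2) y :=
    intervalIntegral.integral_congr (fun y hy => hgeq _ hmidx y (hv ▸ hy))
  have eM1 : (∫ x in a..b, (g x ((c + d) / 2)
        + (1 / (d - c)) * ∫ y in c..d, f ((a + b) / 2) y))
      = ∫ x in a..b, (f x ((c + d) / 2)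
        + (1 / (d - c)) * ∫ y in c..d, f ((a + b) / 2) y) :=
    intervalIntegral.integral_congr (fun x hx => by
      rw [hgeq x (hu ▸ hx) _ hmidy])
  have eDD : (∫ x in a..b, ∫ y in c..d, g x y) = ∫ x in a..b, ∫ y in c..d, f x y :=
    intervalIntegral.integral_congr (fun x hx =>
      intervalIntegral.integral_congr (fun y hy => hgeq x (hu ▸ hx) y (hv ▸ hy)))
  have eK2 : (∫ y in c..d, g b y) = ∫ y in c..d, f b y :=
    intervalIntegral.integral_congr (fun y hy => hgeq b hbx y (hv ▸ hy))
  have eL3 : (∫ y in c..d, (g a y + (1 / (d - c)) * ∫ y in c..d, f b y))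
      = ∫ y in c..d, (f a y + (1 / (d - c)) * ∫ y in c..d, f b y) :=
    intervalIntegral.integral_congr (fun y hy => by rw [hgeq a hax y (hv ▸ hy)])
  have eL2 : (∫ x in a..b, (g x d + (1 / (d - c)) * ∫ y in c..d, (f a y
          + (1 / (d - c)) * ∫ y in c..d, f b y)))
      = ∫ x in a..b, (f x d + (1 / (d - c)) * ∫ y in c..d, (f a y
          + (1 / (d - c)) * ∫ y in c..d, f b y)) :=
    intervalIntegral.integral_congr (fun x hx => by rw [hgeq x (hu ▸ hx) d hdy])
  have eL1 : (∫ x in a..b, (g x c + (1 / (b - a)) * ∫ x in a..b, (f x d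
          + (1 / (d - c)) * ∫ y in c..d, (f a y
          + (1 / (d - c)) * ∫ y in c..d, f b y))))
      = ∫ x in a..b, (f x c + (1 / (b - a)) * ∫ x in a..b, (f x d
          + (1 / (d - c)) * ∫ y in c..d, (f a y
          + (1 / (d - c)) * ∫ y in c..d, f b y))) :=
    intervalIntegral.integral_congr (fun x hx => by rw [hgeq x (hu ▸ hx) c hcy])
  have gmid : g ((a + b) / 2) ((c + d) / 2) = f ((a + b) / 2) ((c + d) / 2) :=
    hgeq _ hmidx _ hmidy
  have gac : g a c = f a c := hgeq a hax c hcy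
  have gad : g a d = f a d := hgeq a hax d hdy
  have gbc : g b c = f b c := hgeq b hbx c hcy
  have gbd : g b d = f b d := hgeq b hbx d hdy
  rw [eY1, eM1, gmid] at h1
  rw [eY1, eM1, eDD] at h2
  rw [eDD, eK2, eL3, eL2, eL1] at h3
  rw [eK2, eL3, eL2, eL1, gac, gad, gbc, gbd] at h4
  exact ⟨h1, h2, h3, h4⟩
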